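/- With the 3-SAT construction of π_1, π_2 as described, suppose z_1, z_2 are natural numbers such that π_1^{z_1} π_2^{z_2} is fixpoint-free. Then for all i ∈ [n]: z_2 ≡ 0 mod p_i if and only if z_2 ≢ 0 mod p̄_i. -/

import Mathlib

/-! 3-SAT construction.  Variables are `x_1, …, x_n`, indexed by `Fin n`; the `j`-th clause is
`C_j = {x̃_{idx j 0}, x̃_{idx j 1}, x̃_{idx j 2}}` with `idx j` strictly monotone, where the
literal on variable `idx j a` is negated iff `neg j a = true`.  The first `2n` primes are
`p_1, …, p_n, p̄_1, …, p̄_n` with `p_i = P (i-1)` and `p̄_i = P (n+i-1)` for the enumeration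
`P` of the primes (`P 0 = 2`).  Every `Sym(ℓ)`-component is realized on `Fin ℓ`, and the
`ℓ`-cycle `([ℓ]) = (1,2,…,ℓ)` is realized as `finRotate ℓ`.  Fixpoint-freeness is checked on
the disjoint union of all components. -/

namespace SatConstruction

lemma sumCongr_pow {A B : Type*} (e : Equiv.Perm A) (f : Equiv.Perm B) (z : ℕ) :
    (Equiv.sumCongr e f) ^ z = Equiv.sumCongr (e ^ z) (f ^ z) := by
  induction z with
  | zero => ext x; cases x <;> rfl
  | succ k ih =>
    rw [pow_succ, ih]
    ext x; cases x <;> simp [pow_succ, Equiv.Perm.mul_apply]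

lemma sigmaCongrRight_pow {A : Type*} {B : A → Type*}
    (F : ∀ a, Equiv.Perm (B a)) (z : ℕ) :
    (Equiv.sigmaCongrRight F) ^ z = Equiv.sigmaCongrRight (fun a => F a ^ z) := by
  induction z with
  | zero => ext ⟨a, b⟩ <;> rfl
  | succ k ih =>
    rw [pow_succ, ih]
    ext ⟨a, b⟩ <;> simp [pow_succ, Equiv.Perm.mul_apply, Equiv.sigmaCongrRight]

lemma refl_pow {A : Type*} (z : ℕ) : (Equiv.refl A) ^ z = Equiv.refl A := one_pow z

open Fin.NatCast in
lemma finRotate_pow_apply {n : ℕ} (w : ℕ) (a : Fin (n + 1)) :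
    ((finRotate (n + 1)) ^ w) a = a + (w : Fin (n + 1)) := by
  induction w generalizing a with
  | zero => simp
  | succ k ih =>
    rw [pow_succ, Equiv.Perm.mul_apply, finRotate_succ_apply, ih, Nat.cast_add, Nat.cast_one]
    abel

open Fin.NatCast in
lemma finRotate_pow_fix_iff {N : ℕ} (hN : 0 < N) (w : ℕ) (a : Fin N) :
    ((finRotate N) ^ w) a = a ↔ N ∣ w := by
  obtain ⟨N, rfl⟩ := Nat.exists_eq_succ_of_ne_zero hN.ne'
  rw [finRotate_pow_apply, add_eq_left, Fin.natCast_eq_zero]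

/-- `P i` is the `(i+1)`-st prime: `P 0 = 2`, `P 1 = 3`, ….  The prime `p_i` associated with
the positive literal `x_i` is `P (i-1)` and the prime `p̄_i` associated with the negative
literal `x̄_i` is `P (n+i-1)` (with `i ∈ [n]` one-indexed). -/
noncomputable def P (i : ℕ) : ℕ := Nat.nth Nat.Prime i

/-- `p̃` of a literal: the prime of the underlying variable, according to the sign. -/
noncomputable def ptil (n : ℕ) {m : ℕ} (idx : Fin m → Fin 3 → Fin n)
    (neg : Fin m → Fin 3 → Bool) (j : Fin m) (a : Fin 3) : ℕ :=
  if neg j a then P (n + (idx j a).val) else P (idx j a).val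

/-- `r_j = p̃_{i_1} p̃_{i_2} p̃_{i_3}` for the clause `C_j`. -/
noncomputable def r (n : ℕ) {m : ℕ} (idx : Fin m → Fin 3 → Fin n)
    (neg : Fin m → Fin 3 → Bool) (j : Fin m) : ℕ :=
  ptil n idx neg j 0 * ptil n idx neg j 1 * ptil n idx neg j 2

/-- The underlying set of the group
`G = ∏_{i=1}^n (Sym(p_i) × Sym(p̄_i) × Sym(p_i p̄_i)^{(p_i-1)(p̄_i-1)+1}) × ∏_{j=1}^m Sym(r_j)`
(embedded in a symmetric group).  The `(p_i-1)(p̄_i-1)+1` copies of `Sym(p_i p̄_i)` are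
indexed by `Option (Fin (p_i - 1) × Fin (p̄_i - 1))`: `none` is the component of `α_{i,3}`
and `some (l-1, k-1)` is the component of `α_{i,l,k}`. -/
abbrev Omega (n : ℕ) {m : ℕ} (idx : Fin m → Fin 3 → Fin n)
    (neg : Fin m → Fin 3 → Bool) : Type :=
  (Σ i : Fin n,
      (Fin (P i.val) ⊕ Fin (P (n + i.val))) ⊕
        (Σ _c : Option (Fin (P i.val - 1) × Fin (P (n + i.val) - 1)),
          Fin (P i.val * P (n + i.val)))) ⊕
    (Σ j : Fin m, Fin (r n idx neg j))

/-- `π_1 = (α_1,…,α_n,β_1,…,β_m)` with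
`α_i = (α_{i,1}, α_{i,2}, α_{i,3}, α_{i,1,1}, …, α_{i,p_i-1,p̄_i-1})`,
`α_{i,1} = ([p_i])`, `α_{i,2} = ([p̄_i])`, `α_{i,3} = id`,
`α_{i,l,k} = ([p_i p̄_i])^{s_{i,l,k}}` and `β_j = id`. -/
noncomputable def pi1 (n : ℕ) {m : ℕ} (idx : Fin m → Fin 3 → Fin n)
    (neg : Fin m → Fin 3 → Bool) (s : Fin n → ℕ → ℕ → ℕ) :
    Equiv.Perm (Omega n idx neg) :=
  Equiv.sumCongr
    (Equiv.sigmaCongrRight fun i =>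
      Equiv.sumCongr
        (Equiv.sumCongr (finRotate _) (finRotate _))
        (Equiv.sigmaCongrRight fun c =>
          match c with
          | none => Equiv.refl _
          | some (l, k) =>
              finRotate (P i.val * P (n + i.val)) ^ s i (l.val + 1) (k.val + 1)))
    (Equiv.refl _)

/-- `π_2 = (γ_1,…,γ_n,δ_1,…,δ_m)` with
`γ_i = (γ_{i,1}, γ_{i,2}, γ_{i,3}, γ_{i,1,1}, …, γ_{i,p_i-1,p̄_i-1})`,
`γ_{i,1} = γ_{i,2} = id`, `γ_{i,3} = γ_{i,l,k} = ([p_i p̄_i])` and `δ_j = ([r_j])`. -/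
noncomputable def pi2 (n : ℕ) {m : ℕ} (idx : Fin m → Fin 3 → Fin n)
    (neg : Fin m → Fin 3 → Bool) :
    Equiv.Perm (Omega n idx neg) :=
  Equiv.sumCongr
    (Equiv.sigmaCongrRight fun _i =>
      Equiv.sumCongr (Equiv.refl _) (Equiv.sigmaCongrRight fun _c => finRotate _))
    (Equiv.sigmaCongrRight fun j => finRotate (r n idx neg j))

/-- If `π_1^{z_1} π_2^{z_2}` is fixpoint-free then for all `i ∈ [n]` we have
`z_2 ≡ 0 (mod p_i)` if and only if `z_2 ≢ 0 (mod p̄_i)`. -/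
theorem z2_dvd_iff
    (n m : ℕ) (idx : Fin m → Fin 3 → Fin n) (hidx : ∀ j, StrictMono (idx j))
    (neg : Fin m → Fin 3 → Bool)
    (s : Fin n → ℕ → ℕ → ℕ)
    -- `s_{i,l,k}` is the unique number in `[0, p_i p̄_i - 1]` with `s_{i,l,k} ≡ l (mod p_i)`
    -- and `s_{i,l,k} ≡ k (mod p̄_i)`, for `l ∈ [p_i - 1]` and `k ∈ [p̄_i - 1]`
    (hs : ∀ i : Fin n, ∀ l k : ℕ, 1 ≤ l → l < P i.val → 1 ≤ k → k < P (n + i.val) →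
      s i l k < P i.val * P (n + i.val) ∧
        s i l k % P i.val = l ∧ s i l k % P (n + i.val) = k)
    (z1 z2 : ℕ)
    (hfpf : ∀ a : Omega n idx neg,
      (pi1 n idx neg s ^ z1 * pi2 n idx neg ^ z2) a ≠ a) :
    ∀ i : Fin n, (P i.val ∣ z2 ↔ ¬ P (n + i.val) ∣ z2) := by
  intro i
  have hp : (P i.val).Prime := Nat.prime_nth_prime _
  have hq : (P (n + i.val)).Prime := Nat.prime_nth_prime _
  have hlt : i.val < n + i.val := lt_of_lt_of_le i.isLt (Nat.le_add_right n i.val)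
  have hne : P i.val ≠ P (n + i.val) :=
    ne_of_lt ((Nat.nth_lt_nth Nat.infinite_setOf_prime).mpr hlt)
  have hcop : Nat.Coprime (P i.val) (P (n + i.val)) := (Nat.coprime_primes hp hq).mpr hne
  have hpqpos : 0 < P i.val * P (n + i.val) := Nat.mul_pos hp.pos hq.pos
  -- p ∤ z1
  have h1 : ¬ P i.val ∣ z1 := by
    have h := hfpf (Sum.inl ⟨i, Sum.inl (Sum.inl ⟨0, hp.pos⟩)⟩)
    simp only [pi1, pi2, Equiv.Perm.mul_apply, sumCongr_pow, sigmaCongrRight_pow, refl_pow,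
      Equiv.sumCongr_apply, Sum.map_inl, Equiv.sigmaCongrRight_apply, Equiv.refl_apply,
      ne_eq] at h
    intro hdvd
    rw [(finRotate_pow_fix_iff hp.pos z1 _).mpr hdvd] at h
    exact h rfl
  -- q ∤ z1
  have h1q : ¬ P (n + i.val) ∣ z1 := by
    have h := hfpf (Sum.inl ⟨i, Sum.inl (Sum.inr ⟨0, hq.pos⟩)⟩)
    simp only [pi1, pi2, Equiv.Perm.mul_apply, sumCongr_pow, sigmaCongrRight_pow, refl_pow,
      Equiv.sumCongr_apply, Sum.map_inl, Sum.map_inr, Equiv.sigmaCongrRight_apply,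
      Equiv.refl_apply, ne_eq] at h
    intro hdvd
    rw [(finRotate_pow_fix_iff hq.pos z1 _).mpr hdvd] at h
    exact h rfl
  -- pq ∤ z2
  have h2 : ¬ P i.val * P (n + i.val) ∣ z2 := by
    have h := hfpf (Sum.inl ⟨i, Sum.inr ⟨none, ⟨0, hpqpos⟩⟩⟩)
    simp only [pi1, pi2, Equiv.Perm.mul_apply, sumCongr_pow, sigmaCongrRight_pow, refl_pow,
      Equiv.sumCongr_apply, Sum.map_inl, Sum.map_inr, Equiv.sigmaCongrRight_apply,
      Equiv.refl_apply, ne_eq] at h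
    intro hdvd
    rw [(finRotate_pow_fix_iff hpqpos z2 _).mpr hdvd] at h
    exact h rfl
  -- pq ∤ s*z1 + z2 for valid l, k
  have h3 : ∀ l k : ℕ, 1 ≤ l → l < P i.val → 1 ≤ k → k < P (n + i.val) →
      ¬ P i.val * P (n + i.val) ∣ (s i l k * z1 + z2) := by
    intro l k hl1 hlp hk1 hkq
    have hl' : l - 1 < P i.val - 1 := by omega
    have hk' : k - 1 < P (n + i.val) - 1 := by omega
    have h := hfpf (Sum.inl ⟨i, Sum.inr ⟨some (⟨l - 1, hl'⟩, ⟨k - 1, hk'⟩), ⟨0, hpqpos⟩⟩⟩)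
    simp only [pi1, pi2, Equiv.Perm.mul_apply, sumCongr_pow, sigmaCongrRight_pow, refl_pow,
      Equiv.sumCongr_apply, Sum.map_inl, Sum.map_inr, Equiv.sigmaCongrRight_apply,
      Equiv.refl_apply, ne_eq] at h
    rw [← pow_mul, ← Equiv.Perm.mul_apply, ← pow_add] at h
    have hl'' : l - 1 + 1 = l := by omega
    have hk'' : k - 1 + 1 = k := by omega
    rw [hl'', hk''] at h
    intro hdvd
    rw [(finRotate_pow_fix_iff hpqpos _ _).mpr hdvd] at h
    exact h rfl
  constructor
  · intro hpz2 hqz2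
    exact h2 (hcop.mul_dvd_of_dvd_of_dvd hpz2 hqz2)
  · intro hqz2
    by_contra hpz2
    haveI : Fact (P i.val).Prime := ⟨hp⟩
    haveI : Fact (P (n + i.val)).Prime := ⟨hq⟩
    have hz1p : (z1 : ZMod (P i.val)) ≠ 0 := fun h =>
      h1 ((ZMod.natCast_eq_zero_iff _ _).mp h)
    have hz1q : (z1 : ZMod (P (n + i.val))) ≠ 0 := fun h =>
      h1q ((ZMod.natCast_eq_zero_iff _ _).mp h)
    have hz2p : (z2 : ZMod (P i.val)) ≠ 0 := fun h =>
      hpz2 ((ZMod.natCast_eq_zero_iff _ _).mp h)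
    have hz2q : (z2 : ZMod (P (n + i.val))) ≠ 0 := fun h =>
      hqz2 ((ZMod.natCast_eq_zero_iff _ _).mp h)
    set L : ZMod (P i.val) := -(z2 : ZMod (P i.val)) * (z1 : ZMod (P i.val))⁻¹ with hL
    set K : ZMod (P (n + i.val)) :=
      -(z2 : ZMod (P (n + i.val))) * (z1 : ZMod (P (n + i.val)))⁻¹ with hK
    have hL0 : L ≠ 0 := mul_ne_zero (neg_ne_zero.mpr hz2p) (inv_ne_zero hz1p)
    have hK0 : K ≠ 0 := mul_ne_zero (neg_ne_zero.mpr hz2q) (inv_ne_zero hz1q)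
    have hl1 : 1 ≤ L.val := Nat.one_le_iff_ne_zero.mpr (fun h => hL0 ((ZMod.val_eq_zero L).mp h))
    have hk1 : 1 ≤ K.val := Nat.one_le_iff_ne_zero.mpr (fun h => hK0 ((ZMod.val_eq_zero K).mp h))
    have hlp : L.val < P i.val := ZMod.val_lt L
    have hkq : K.val < P (n + i.val) := ZMod.val_lt K
    obtain ⟨hslt, hsp, hsq⟩ := hs i L.val K.val hl1 hlp hk1 hkq
    have hdp : P i.val ∣ s i L.val K.val * z1 + z2 := by
      rw [← ZMod.natCast_eq_zero_iff]
      push_cast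
      have : ((s i L.val K.val : ℕ) : ZMod (P i.val)) = L := by
        rw [← ZMod.natCast_mod, hsp, ZMod.natCast_zmod_val]
      rw [this, hL]
      field_simp
      ring
    have hdq : P (n + i.val) ∣ s i L.val K.val * z1 + z2 := by
      rw [← ZMod.natCast_eq_zero_iff]
      push_cast
      have : ((s i L.val K.val : ℕ) : ZMod (P (n + i.val))) = K := by
        rw [← ZMod.natCast_mod, hsq, ZMod.natCast_zmod_val]
      rw [this, hK]
      field_simp
      ring
    exact h3 L.val K.val hl1 hlp hk1 hkq
      (hcop.mul_dvd_of_dvd_of_dvd hdp hdq)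



end SatConstruction
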